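/- arXiv:1309.2502 — 4 statements merged into one kernel-verified Lean document; each statement's English description precedes it below -/
import Mathlib

section
/- Proposition 1 (the Gaussian SDP relaxation is a rank-D relaxation). Assume r(i,j) > 0 for all (i,j) ∈ E and v(i,k) > 0 for all (i,k) ∈ Ea. Let F be the set of tuples (X, Y, δ, d, ε, e) satisfying the edge constraints, the anchor constraints, the global PSD constraint, and Y.PosSemidef. If a tuple (X*, Y*, δ*, d*, ε*, e*) ∈ F minimizes f_GN over F, then δ*(i,j) = d*(i,j)^2 for every (i,j) ∈ E and ε*(i,k) = e*(i,k)^2 for every (i,k) ∈ Ea. -/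
open Matrix
open scoped RealInnerProductSpace

/-- The `i`-th column of the position matrix `X`, viewed as a point of
`EuclideanSpace ℝ (Fin D)`. -/
def col {D n : ℕ} (X : Matrix (Fin D) (Fin n) ℝ) (i : Fin n) :
    EuclideanSpace ℝ (Fin D) :=
  WithLp.toLp 2 (fun t => X t i)

/-- Edge constraints (5b): for every `(i,j) ∈ E`,
`Yᵢᵢ + Yⱼⱼ − 2Yᵢⱼ = δᵢⱼ`, `δᵢⱼ ≥ 0`, `dᵢⱼ ≥ 0`, and `dᵢⱼ² ≤ δᵢⱼ`
(Schur form of the LMI `[[1, d],[d, δ]] ⪰ 0`). -/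
def EdgeConstraints {n : ℕ} (E : Finset (Fin n × Fin n))
    (Y : Matrix (Fin n) (Fin n) ℝ) (δ d : Fin n × Fin n → ℝ) : Prop :=
  ∀ p ∈ E, Y p.1 p.1 + Y p.2 p.2 - 2 * Y p.1 p.2 = δ p ∧
    0 ≤ δ p ∧ 0 ≤ d p ∧ d p ^ 2 ≤ δ p

/-- Anchor constraints (5c): for every `(i,k) ∈ Ea`,
`Yᵢᵢ − 2⟪xᵢ, aₖ⟫ + ‖aₖ‖² = εᵢₖ`, `εᵢₖ ≥ 0`, `eᵢₖ ≥ 0`, and `eᵢₖ² ≤ εᵢₖ`. -/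
def AnchorConstraints {D n m : ℕ} (Ea : Finset (Fin n × Fin m))
    (a : Fin m → EuclideanSpace ℝ (Fin D))
    (X : Matrix (Fin D) (Fin n) ℝ) (Y : Matrix (Fin n) (Fin n) ℝ)
    (ε e : Fin n × Fin m → ℝ) : Prop :=
  ∀ q ∈ Ea, Y q.1 q.1 - 2 * ⟪_root_.col X q.1, a q.2⟫ + ‖a q.2‖ ^ 2 = ε q ∧
    0 ≤ ε q ∧ 0 ≤ e q ∧ e q ^ 2 ≤ ε q

/-- The Gaussian ML cost `f_GN` of the relaxation (7). -/
noncomputable def fGN {n m : ℕ} (E : Finset (Fin n × Fin n))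
    (Ea : Finset (Fin n × Fin m))
    (r : Fin n × Fin n → ℝ) (v : Fin n × Fin m → ℝ)
    (σ : Fin n × Fin n → ℝ) (σa : Fin n × Fin m → ℝ)
    (δ d : Fin n × Fin n → ℝ) (ε e : Fin n × Fin m → ℝ) : ℝ :=
  (∑ p ∈ E, (σ p)⁻¹ ^ 2 * (δ p - 2 * d p * r p + r p ^ 2)) +
    ∑ q ∈ Ea, (σa q)⁻¹ ^ 2 * (ε q - 2 * e q * v q + v q ^ 2)

/-- Proposition 1: the Gaussian SDP relaxation (7) is a rank-D relaxation.
If a feasible tuple minimizes the Gaussian ML cost `f_GN` over the feasible set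
(edge constraints, anchor constraints, global PSD constraint and `Y ⪰ 0`),
then at optimality `δᵢⱼ = dᵢⱼ²` on `E` and `εᵢₖ = eᵢₖ²` on `Ea`. -/
theorem gaussian_sdp_rankD (D n m : ℕ)
    (E : Finset (Fin n × Fin n)) (Ea : Finset (Fin n × Fin m))
    (a : Fin m → EuclideanSpace ℝ (Fin D))
    (r : Fin n × Fin n → ℝ) (v : Fin n × Fin m → ℝ)
    (σ : Fin n × Fin n → ℝ) (σa : Fin n × Fin m → ℝ)
    (hr : ∀ p ∈ E, 0 < r p) (hv : ∀ q ∈ Ea, 0 < v q)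
    (hσ : ∀ p ∈ E, 0 < σ p) (hσa : ∀ q ∈ Ea, 0 < σa q)
    (X : Matrix (Fin D) (Fin n) ℝ) (Y : Matrix (Fin n) (Fin n) ℝ)
    (δ d : Fin n × Fin n → ℝ) (ε e : Fin n × Fin m → ℝ)
    (hE : EdgeConstraints E Y δ d)
    (hA : AnchorConstraints Ea a X Y ε e)
    (hPSD : (Matrix.fromBlocks (1 : Matrix (Fin D) (Fin D) ℝ) X Xᵀ Y).PosSemidef)
    (hY : Y.PosSemidef)
    (hmin : ∀ (X' : Matrix (Fin D) (Fin n) ℝ) (Y' : Matrix (Fin n) (Fin n) ℝ)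
      (δ' d' : Fin n × Fin n → ℝ) (ε' e' : Fin n × Fin m → ℝ),
      EdgeConstraints E Y' δ' d' → AnchorConstraints Ea a X' Y' ε' e' →
      (Matrix.fromBlocks (1 : Matrix (Fin D) (Fin D) ℝ) X' X'ᵀ Y').PosSemidef →
      Y'.PosSemidef →
      fGN E Ea r v σ σa δ d ε e ≤ fGN E Ea r v σ σa δ' d' ε' e') :
    (∀ p ∈ E, δ p = d p ^ 2) ∧ ∀ q ∈ Ea, ε q = e q ^ 2 := by

  constructor
  · intro p hp
    obtain ⟨hEq, hδ, hd, hdδ⟩ := hE p hp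
    have hd' : EdgeConstraints E Y δ (Function.update d p (Real.sqrt (δ p))) := by
      intro q hq
      obtain ⟨h1, h2, h3, h4⟩ := hE q hq
      by_cases hqp : q = p
      · subst hqp
        simp only [Function.update_self]
        exact ⟨h1, h2, Real.sqrt_nonneg _, by rw [Real.sq_sqrt h2]⟩
      · simp only [Function.update_of_ne hqp]
        exact ⟨h1, h2, h3, h4⟩
    have hle := hmin X Y δ (Function.update d p (Real.sqrt (δ p))) ε e hd' hA hPSD hY
    unfold fGN at hle
    have hsum : ∀ d'' : Fin n × Fin n → ℝ,
        (∑ q ∈ E, (σ q)⁻¹ ^ 2 * (δ q - 2 * d'' q * r q + r q ^ 2)) =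
        (σ p)⁻¹ ^ 2 * (δ p - 2 * d'' p * r p + r p ^ 2) +
        ∑ q ∈ E.erase p, (σ q)⁻¹ ^ 2 * (δ q - 2 * d'' q * r q + r q ^ 2) :=
      fun d'' => (Finset.add_sum_erase E _ hp).symm
    rw [hsum d, hsum (Function.update d p (Real.sqrt (δ p)))] at hle
    have herase : ∑ q ∈ E.erase p, (σ q)⁻¹ ^ 2 *
        (δ q - 2 * Function.update d p (Real.sqrt (δ p)) q * r q + r q ^ 2) =
        ∑ q ∈ E.erase p, (σ q)⁻¹ ^ 2 * (δ q - 2 * d q * r q + r q ^ 2) := by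
      refine Finset.sum_congr rfl fun q hq => ?_
      rw [Function.update_of_ne (Finset.ne_of_mem_erase hq)]
    rw [herase, Function.update_self] at hle
    have hkey : (σ p)⁻¹ ^ 2 * (δ p - 2 * d p * r p + r p ^ 2) ≤
        (σ p)⁻¹ ^ 2 * (δ p - 2 * Real.sqrt (δ p) * r p + r p ^ 2) := by linarith
    have hσp : 0 < (σ p)⁻¹ ^ 2 := by exact pow_pos (inv_pos.mpr (hσ p hp)) 2
    have hrp := hr p hp
    have hsd : Real.sqrt (δ p) ≤ d p := by
      have := (mul_le_mul_iff_right₀ hσp).mp hkey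
      nlinarith
    have : δ p ≤ d p ^ 2 := by
      nlinarith [Real.sq_sqrt hδ, Real.sqrt_nonneg (δ p)]
    linarith
  · intro p hp
    obtain ⟨hEq, hδ, hd, hdδ⟩ := hA p hp
    have hd' : AnchorConstraints Ea a X Y ε (Function.update e p (Real.sqrt (ε p))) := by
      intro q hq
      obtain ⟨h1, h2, h3, h4⟩ := hA q hq
      by_cases hqp : q = p
      · subst hqp
        simp only [Function.update_self]
        exact ⟨h1, h2, Real.sqrt_nonneg _, by rw [Real.sq_sqrt h2]⟩
      · simp only [Function.update_of_ne hqp]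
        exact ⟨h1, h2, h3, h4⟩
    have hle := hmin X Y δ d ε (Function.update e p (Real.sqrt (ε p))) hE hd' hPSD hY
    unfold fGN at hle
    have hsum : ∀ e'' : Fin n × Fin m → ℝ,
        (∑ q ∈ Ea, (σa q)⁻¹ ^ 2 * (ε q - 2 * e'' q * v q + v q ^ 2)) =
        (σa p)⁻¹ ^ 2 * (ε p - 2 * e'' p * v p + v p ^ 2) +
        ∑ q ∈ Ea.erase p, (σa q)⁻¹ ^ 2 * (ε q - 2 * e'' q * v q + v q ^ 2) :=
      fun e'' => (Finset.add_sum_erase Ea _ hp).symm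
    rw [hsum e, hsum (Function.update e p (Real.sqrt (ε p)))] at hle
    have herase : ∑ q ∈ Ea.erase p, (σa q)⁻¹ ^ 2 *
        (ε q - 2 * Function.update e p (Real.sqrt (ε p)) q * v q + v q ^ 2) =
        ∑ q ∈ Ea.erase p, (σa q)⁻¹ ^ 2 * (ε q - 2 * e q * v q + v q ^ 2) := by
      refine Finset.sum_congr rfl fun q hq => ?_
      rw [Function.update_of_ne (Finset.ne_of_mem_erase hq)]
    rw [herase, Function.update_self] at hle
    have hkey : (σa p)⁻¹ ^ 2 * (ε p - 2 * e p * v p + v p ^ 2) ≤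
        (σa p)⁻¹ ^ 2 * (ε p - 2 * Real.sqrt (ε p) * v p + v p ^ 2) := by linarith
    have hσp : 0 < (σa p)⁻¹ ^ 2 := by exact pow_pos (inv_pos.mpr (hσa p hp)) 2
    have hrp := hv p hp
    have hsd : Real.sqrt (ε p) ≤ e p := by
      have := (mul_le_mul_iff_right₀ hσp).mp hkey
      nlinarith
    have : ε p ≤ e p ^ 2 := by
      nlinarith [Real.sq_sqrt hδ, Real.sqrt_nonneg (ε p)]
    linarith
end

section
/- Edge-based rank-D property (claim of Section IV for the Gaussian E-ML relaxation). Assume r(i,j) > 0 for all (i,j) ∈ E and v(i,k) > 0 for all (i,k) ∈ Ea. Let F_edge be the set of tuples (X, Y, δ, d, ε, e) satisfying the edge constraints, the anchor constraints, and the edge PSD constraint. If a tuple (X*, Y*, δ*, d*, ε*, e*) ∈ F_edge minimizes f_GN over F_edge, then δ*(i,j) = d*(i,j)^2 for every (i,j) ∈ E and ε*(i,k) = e*(i,k)^2 for every (i,k) ∈ Ea. -/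
open Matrix
open scoped RealInnerProductSpace

/-- Edge PSD constraint (12): for every `(i,j) ∈ E`, the block matrix
`[[I_D, xᵢ, xⱼ],[xᵢᵀ, Yᵢᵢ, Yᵢⱼ],[xⱼᵀ, Yᵢⱼ, Yⱼⱼ]]` is positive semidefinite. -/
def EdgePSD {D n : ℕ} (E : Finset (Fin n × Fin n))
    (X : Matrix (Fin D) (Fin n) ℝ) (Y : Matrix (Fin n) (Fin n) ℝ) : Prop :=
  ∀ p ∈ E, (Matrix.fromBlocks (1 : Matrix (Fin D) (Fin D) ℝ)
      (Matrix.of fun t s => ![X t p.1, X t p.2] s)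
      (Matrix.of fun t s => ![X t p.1, X t p.2] s)ᵀ
      !![Y p.1 p.1, Y p.1 p.2; Y p.1 p.2, Y p.2 p.2]).PosSemidef

/-- Edge-based rank-D property (Section IV, Gaussian E-ML relaxation): if a
tuple satisfying the edge constraints, the anchor constraints and the edge PSD
constraints minimizes the Gaussian ML cost `f_GN` over all such tuples, then at
optimality `δᵢⱼ = dᵢⱼ²` on `E` and `εᵢₖ = eᵢₖ²` on `Ea`. -/
theorem gaussian_eml_rankD_property (D n m : ℕ)
    (E : Finset (Fin n × Fin n)) (Ea : Finset (Fin n × Fin m))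
    (a : Fin m → EuclideanSpace ℝ (Fin D))
    (r : Fin n × Fin n → ℝ) (v : Fin n × Fin m → ℝ)
    (σ : Fin n × Fin n → ℝ) (σa : Fin n × Fin m → ℝ)
    (hr : ∀ p ∈ E, 0 < r p) (hv : ∀ q ∈ Ea, 0 < v q)
    (hσ : ∀ p ∈ E, 0 < σ p) (hσa : ∀ q ∈ Ea, 0 < σa q)
    (X : Matrix (Fin D) (Fin n) ℝ) (Y : Matrix (Fin n) (Fin n) ℝ)
    (δ d : Fin n × Fin n → ℝ) (ε e : Fin n × Fin m → ℝ)
    (hE : EdgeConstraints E Y δ d)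
    (hA : AnchorConstraints Ea a X Y ε e)
    (hPSD : EdgePSD E X Y)
    (hmin : ∀ (X' : Matrix (Fin D) (Fin n) ℝ) (Y' : Matrix (Fin n) (Fin n) ℝ)
      (δ' d' : Fin n × Fin n → ℝ) (ε' e' : Fin n × Fin m → ℝ),
      EdgeConstraints E Y' δ' d' → AnchorConstraints Ea a X' Y' ε' e' →
      EdgePSD E X' Y' →
      fGN E Ea r v σ σa δ d ε e ≤ fGN E Ea r v σ σa δ' d' ε' e') :
    (∀ p ∈ E, δ p = d p ^ 2) ∧ ∀ q ∈ Ea, ε q = e q ^ 2 := by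
  constructor
  · intro p hp
    by_contra hne
    obtain ⟨heq, hδ, hd, hle⟩ := hE p hp
    have hlt : d p ^ 2 < δ p := lt_of_le_of_ne hle (fun h => hne h.symm)
    set d' := Function.update d p (Real.sqrt (δ p)) with hd'
    have hE' : EdgeConstraints E Y δ d' := by
      intro q hq
      obtain ⟨h1, h2, h3, h4⟩ := hE q hq
      by_cases hqp : q = p
      · subst hqp
        refine ⟨h1, h2, ?_, ?_⟩ <;>
          simp [hd', Function.update_self, Real.sqrt_nonneg, Real.sq_sqrt h2, le_refl]
      · simp only [hd', Function.update_of_ne hqp]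
        exact ⟨h1, h2, h3, h4⟩
    have hmin' := hmin X Y δ d' ε e hE' hA hPSD
    have hdlt : d p < Real.sqrt (δ p) := by
      have := Real.sqrt_lt_sqrt (by positivity : (0:ℝ) ≤ d p ^ 2) hlt
      rwa [Real.sqrt_sq hd] at this
    have hstrict : fGN E Ea r v σ σa δ d' ε e < fGN E Ea r v σ σa δ d ε e := by
      unfold fGN
      apply add_lt_add_left
      apply Finset.sum_lt_sum
      · intro q hq
        by_cases hqp : q = p
        · subst hqp
          have hσq := hσ q hq
          have hrq := hr q hq
          have hσinv : 0 < (σ q)⁻¹ ^ 2 := by positivity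
          have hupd : d' q = Real.sqrt (δ q) := Function.update_self _ _ _
          rw [hupd]
          nlinarith [mul_pos hrq (sub_pos.mpr hdlt)]
        · simp [hd', Function.update_of_ne hqp]
      · refine ⟨p, hp, ?_⟩
        have hσq := hσ p hp
        have hrq := hr p hp
        have hσinv : 0 < (σ p)⁻¹ ^ 2 := by positivity
        have hupd : d' p = Real.sqrt (δ p) := Function.update_self _ _ _
        rw [hupd]
        nlinarith [mul_pos hrq (sub_pos.mpr hdlt)]
    linarith
  · intro q hq
    by_contra hne
    obtain ⟨heq, hε, he, hle⟩ := hA q hq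
    have hlt : e q ^ 2 < ε q := lt_of_le_of_ne hle (fun h => hne h.symm)
    set e' := Function.update e q (Real.sqrt (ε q)) with he'
    have hA' : AnchorConstraints Ea a X Y ε e' := by
      intro q' hq'
      obtain ⟨h1, h2, h3, h4⟩ := hA q' hq'
      by_cases hqp : q' = q
      · subst hqp
        refine ⟨h1, h2, ?_, ?_⟩ <;>
          simp [he', Function.update_self, Real.sqrt_nonneg, Real.sq_sqrt h2, le_refl]
      · simp only [he', Function.update_of_ne hqp]
        exact ⟨h1, h2, h3, h4⟩
    have hmin' := hmin X Y δ d ε e' hE hA' hPSD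
    have helt : e q < Real.sqrt (ε q) := by
      have := Real.sqrt_lt_sqrt (by positivity : (0:ℝ) ≤ e q ^ 2) hlt
      rwa [Real.sqrt_sq he] at this
    have hstrict : fGN E Ea r v σ σa δ d ε e' < fGN E Ea r v σ σa δ d ε e := by
      unfold fGN
      apply add_lt_add_right
      apply Finset.sum_lt_sum
      · intro q' hq'
        by_cases hqp : q' = q
        · subst hqp
          have hσq := hσa q' hq'
          have hvq := hv q' hq'
          have hσinv : 0 < (σa q')⁻¹ ^ 2 := by positivity
          have hupd : e' q' = Real.sqrt (ε q') := Function.update_self _ _ _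
          rw [hupd]
          nlinarith [mul_pos hvq (sub_pos.mpr helt)]
        · simp [he', Function.update_of_ne hqp]
      · refine ⟨q, hq, ?_⟩
        have hσq := hσa q hq
        have hvq := hv q hq
        have hσinv : 0 < (σa q)⁻¹ ^ 2 := by positivity
        have hupd : e' q = Real.sqrt (ε q) := Function.update_self _ _ _
        rw [hupd]
        nlinarith [mul_pos hvq (sub_pos.mpr helt)]
    linarith
end

section
/- Feasibility of the exact lift in the relaxation (the relaxation (5) lower-bounds the ML problem (3)). For every X : Matrix (Fin D) (Fin n) ℝ, the tuple (X, Xᵀ * X, δ, d, ε, e) defined by d(i,j) = ‖x_i − x_j‖, δ(i,j) = ‖x_i − x_j‖^2 for (i,j) ∈ E and e(i,k) = ‖x_i − a k‖, ε(i,k) = ‖x_i − a k‖^2 for (i,k) ∈ Ea satisfies the edge constraints, the anchor constraints, the global PSD constraint, and (Xᵀ * X).PosSemidef. -/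
open Matrix
open scoped RealInnerProductSpace

lemma mul_apply_inner {D n : ℕ} (X : Matrix (Fin D) (Fin n) ℝ) (i j : Fin n) :
    (Xᵀ * X) i j = ⟪_root_.col X i, _root_.col X j⟫ := by
  simp [Matrix.mul_apply, _root_.col, PiLp.inner_apply, RCLike.inner_apply, mul_comm]

/-- Feasibility of the exact lift in the relaxation (5): for every `X`, the
tuple `(X, XᵀX, δ, d, ε, e)` with `d, δ` (resp. `e, ε`) the true inter-sensor
(resp. sensor-anchor) distances and squared distances satisfies the edge
constraints, the anchor constraints, the global PSD constraint, and
`(XᵀX) ⪰ 0`; hence the relaxation lower-bounds the ML problem (3). -/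
theorem exact_lift_feasible (D n m : ℕ)
    (E : Finset (Fin n × Fin n)) (Ea : Finset (Fin n × Fin m))
    (a : Fin m → EuclideanSpace ℝ (Fin D))
    (X : Matrix (Fin D) (Fin n) ℝ) :
    EdgeConstraints E (Xᵀ * X)
      (fun p => ‖_root_.col X p.1 - _root_.col X p.2‖ ^ 2) (fun p => ‖_root_.col X p.1 - _root_.col X p.2‖) ∧
    AnchorConstraints Ea a X (Xᵀ * X)
      (fun q => ‖_root_.col X q.1 - a q.2‖ ^ 2) (fun q => ‖_root_.col X q.1 - a q.2‖) ∧
    (Matrix.fromBlocks (1 : Matrix (Fin D) (Fin D) ℝ) X Xᵀ (Xᵀ * X)).PosSemidef ∧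
    (Xᵀ * X).PosSemidef := by
  have key : ∀ (u v : EuclideanSpace ℝ (Fin D)),
      ⟪u, u⟫ - 2 * ⟪u, v⟫ + ‖v‖ ^ 2 = ‖u - v‖ ^ 2 := by
    intro u v
    rw [@norm_sub_sq_real, real_inner_self_eq_norm_sq]
  refine ⟨?_, ?_, ?_, ?_⟩
  · intro p _
    refine ⟨?_, sq_nonneg _, norm_nonneg _, le_refl _⟩
    simp only [mul_apply_inner]
    rw [← key (_root_.col X p.1) (_root_.col X p.2)]
    simp only [real_inner_self_eq_norm_sq]
    ring
  · intro q _
    refine ⟨?_, sq_nonneg _, norm_nonneg _, le_refl _⟩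
    simp only [mul_apply_inner]
    rw [← key (_root_.col X q.1) (a q.2), real_inner_self_eq_norm_sq]
  · have h : Matrix.fromBlocks (1 : Matrix (Fin D) (Fin D) ℝ) X Xᵀ (Xᵀ * X)
        = (Matrix.fromRows (1 : Matrix (Fin D) (Fin D) ℝ) Xᵀ) *
          (Matrix.fromRows (1 : Matrix (Fin D) (Fin D) ℝ) Xᵀ)ᵀ := by
      ext (i | i) (j | j) <;>
        simp [Matrix.mul_apply, Matrix.fromBlocks, Matrix.one_apply, Matrix.fromRows_apply_inl, Matrix.fromRows_apply_inr]
    rw [h]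
    have := Matrix.posSemidef_self_mul_conjTranspose
      (Matrix.fromRows (1 : Matrix (Fin D) (Fin D) ℝ) Xᵀ)
    simpa using this
  · have := Matrix.posSemidef_conjTranspose_mul_self X
    simpa using this
end

section
/- Marginals of log-concave functions over a convex set are log-concave (Prékopa). Let f : ℝ × ℝ → ℝ≥0∞ be measurable and log-concave, i.e. for all a b : ℝ × ℝ and t ∈ Set.Icc (0:ℝ) 1, f(t • a + (1−t) • b) ≥ f(a)^t * f(b)^(1−t). Let Q ⊆ ℝ be a convex measurable set. Then the function g : ℝ → ℝ≥0∞ defined by g(d) = ∫⁻_{r ∈ Q} f(d, r) dr (lower Lebesgue integral) is log-concave: for all d₁ d₂ : ℝ and t ∈ Set.Icc (0:ℝ) 1, g(t·d₁ + (1−t)·d₂) ≥ g(d₁)^t * g(d₂)^(1−t). -/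
open MeasureTheory
open scoped ENNReal

section PrekopaAux
open Set Pointwise
open scoped NNReal

lemma bm_compact {K₁ K₂ : Set ℝ} (h₁ : IsCompact K₁) (h₂ : IsCompact K₂)
    (n₁ : K₁.Nonempty) (n₂ : K₂.Nonempty) :
    volume K₁ + volume K₂ ≤ volume (K₁ + K₂) := by
  set a := sSup K₁ with ha
  set b := sInf K₂ with hb
  have haK : a ∈ K₁ := h₁.sSup_mem n₁
  have hbK : b ∈ K₂ := h₂.sInf_mem n₂
  set X := (fun x => x + b) '' K₁ with hX
  set Y := (fun y => a + y) '' K₂ with hY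
  have hXsub : X ⊆ K₁ + K₂ := by
    rintro _ ⟨x, hx, rfl⟩; exact add_mem_add hx hbK
  have hYsub : Y ⊆ K₁ + K₂ := by
    rintro _ ⟨y, hy, rfl⟩; exact add_mem_add haK hy
  have hXY : X ∩ Y ⊆ {a + b} := by
    rintro z ⟨⟨x, hx, rfl⟩, ⟨y, hy, hz⟩⟩
    have h1 : x + b ≤ a + b := add_le_add_left (le_csSup h₁.bddAbove hx) b
    have h2 : a + b ≤ a + y := add_le_add_right (csInf_le h₂.bddBelow hy) a
    simp only [mem_singleton_iff]
    simp only at hz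
    linarith
  have hXvol : volume X = volume K₁ := by
    rw [hX, Set.image_add_right, measure_preimage_add_right]
  have hYvol : volume Y = volume K₂ := by
    rw [hY, Set.image_add_left, measure_preimage_add]
  have hXYnull : volume (X ∩ Y) = 0 :=
    le_antisymm (le_trans (measure_mono hXY) (by simp)) zero_le
  have hYm : MeasurableSet Y := ((h₂.image (continuous_add_left a)).measurableSet)
  calc volume K₁ + volume K₂ = volume X + volume Y := by rw [hXvol, hYvol]
    _ = volume (X ∪ Y) + volume (X ∩ Y) := (measure_union_add_inter X hYm).symm
    _ = volume (X ∪ Y) := by rw [hXYnull, add_zero]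
    _ ≤ volume (K₁ + K₂) := measure_mono (union_subset hXsub hYsub)

lemma vol_smul (c : ℝ) (hc : 0 ≤ c) (s : Set ℝ) :
    volume (c • s) = ENNReal.ofReal c * volume s := by
  rw [Measure.addHaar_smul]
  simp [abs_of_nonneg hc]

lemma bm {t : ℝ} (ht0 : 0 < t) (ht1 : t < 1) {A B C : Set ℝ}
    (hA : MeasurableSet A) (hB : MeasurableSet B)
    (hAne : A.Nonempty) (hBne : B.Nonempty)
    (hsub : ∀ x ∈ A, ∀ y ∈ B, t * x + (1 - t) * y ∈ C) :
    ENNReal.ofReal t * volume A + ENNReal.ofReal (1 - t) * volume B ≤ volume C := by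
  obtain ⟨x₀, hx₀⟩ := hAne
  obtain ⟨y₀, hy₀⟩ := hBne
  -- key: for compact subsets
  have key : ∀ K₁ ⊆ A, IsCompact K₁ → ∀ K₂ ⊆ B, IsCompact K₂ →
      ENNReal.ofReal t * volume K₁ + ENNReal.ofReal (1 - t) * volume K₂ ≤ volume C := by
    intro K₁ hK₁A hK₁c K₂ hK₂B hK₂c
    set L₁ := K₁ ∪ {x₀} with hL₁
    set L₂ := K₂ ∪ {y₀} with hL₂
    have hL₁c : IsCompact L₁ := hK₁c.union isCompact_singleton
    have hL₂c : IsCompact L₂ := hK₂c.union isCompact_singleton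
    have hL₁A : L₁ ⊆ A := union_subset hK₁A (by simpa using hx₀)
    have hL₂B : L₂ ⊆ B := union_subset hK₂B (by simpa using hy₀)
    have hsum : (t • L₁) + ((1 - t) • L₂) ⊆ C := by
      rintro _ ⟨_, ⟨x, hx, rfl⟩, _, ⟨y, hy, rfl⟩, rfl⟩
      exact hsub x (hL₁A hx) y (hL₂B hy)
    have hbm := bm_compact (hL₁c.smul t) (hL₂c.smul (1 - t))
      ((Set.Nonempty.smul_set ⟨x₀, by simp [hL₁]⟩)) ((Set.Nonempty.smul_set ⟨y₀, by simp [hL₂]⟩))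
    calc ENNReal.ofReal t * volume K₁ + ENNReal.ofReal (1 - t) * volume K₂
        ≤ ENNReal.ofReal t * volume L₁ + ENNReal.ofReal (1 - t) * volume L₂ := by
          gcongr <;> exact subset_union_left
      _ = volume (t • L₁) + volume ((1 - t) • L₂) := by
          rw [vol_smul t ht0.le, vol_smul (1 - t) (by linarith)]
      _ ≤ volume ((t • L₁) + ((1 - t) • L₂)) := hbm
      _ ≤ volume C := measure_mono hsum
  -- pass to sup
  rw [hA.measure_eq_iSup_isCompact volume, hB.measure_eq_iSup_isCompact volume]
  have e1 : ∀ (D : Set ℝ), (⨆ (K : Set ℝ) (_ : K ⊆ D) (_ : IsCompact K), volume K)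
      = ⨆ (K : {K : Set ℝ // K ⊆ D ∧ IsCompact K}), volume K.1 := by
    intro D
    rw [iSup_subtype]
    simp_rw [iSup_and]
  rw [e1 A, e1 B, ENNReal.mul_iSup, ENNReal.mul_iSup]
  have : Nonempty {K : Set ℝ // K ⊆ A ∧ IsCompact K} := ⟨⟨∅, empty_subset _, isCompact_empty⟩⟩
  have : Nonempty {K : Set ℝ // K ⊆ B ∧ IsCompact K} := ⟨⟨∅, empty_subset _, isCompact_empty⟩⟩
  exact ENNReal.iSup_add_iSup_le fun K₁ K₂ => key K₁.1 K₁.2.1 K₁.2.2 K₂.1 K₂.2.1 K₂.2.2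

lemma PL_norm (g₁ g₂ h : ℝ → ℝ≥0∞) (m₁ : Measurable g₁) (m₂ : Measurable g₂)
    (mh : Measurable h) {t : ℝ} (ht0 : 0 < t) (ht1 : t < 1)
    (hb₁ : ∀ x, g₁ x ≤ 1) (hb₂ : ∀ x, g₂ x ≤ 1)
    (hs₁ : ∀ s : ℝ≥0∞, s < 1 → ∃ x, s < g₁ x)
    (hs₂ : ∀ s : ℝ≥0∞, s < 1 → ∃ x, s < g₂ x)
    (H : ∀ x y, g₁ x ^ t * g₂ y ^ (1 - t) ≤ h (t * x + (1 - t) * y)) :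
    ENNReal.ofReal t * (∫⁻ x, g₁ x) + ENNReal.ofReal (1 - t) * (∫⁻ x, g₂ x) ≤ ∫⁻ x, h x := by
  set h' : ℝ → ℝ≥0∞ := fun x => min (h x) 1 with hh'
  have mh' : Measurable h' := mh.min measurable_const
  have hb' : ∀ x, h' x ≤ 1 := fun x => min_le_right _ _
  set G₁ : ℝ → ℝ := fun x => (g₁ x).toReal with hG₁
  set G₂ : ℝ → ℝ := fun x => (g₂ x).toReal with hG₂
  set Hf : ℝ → ℝ := fun x => (h' x).toReal with hHf
  have mG₁ : Measurable G₁ := m₁.ennreal_toReal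
  have mG₂ : Measurable G₂ := m₂.ennreal_toReal
  have mHf : Measurable Hf := mh'.ennreal_toReal
  have fin₁ : ∀ x, g₁ x ≠ ∞ := fun x => ((hb₁ x).trans_lt ENNReal.one_lt_top).ne
  have fin₂ : ∀ x, g₂ x ≠ ∞ := fun x => ((hb₂ x).trans_lt ENNReal.one_lt_top).ne
  have finh : ∀ x, h' x ≠ ∞ := fun x => ((hb' x).trans_lt ENNReal.one_lt_top).ne
  -- layer cake representations
  have lc : ∀ (g : ℝ → ℝ≥0∞), Measurable g → (∀ x, g x ≠ ∞) →
      ∫⁻ x, g x = ∫⁻ s in Ioi (0:ℝ), volume {x | s < (g x).toReal} := by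
    intro g mg fing
    rw [← lintegral_eq_lintegral_meas_lt volume
      (Filter.Eventually.of_forall fun x => ENNReal.toReal_nonneg) mg.ennreal_toReal.aemeasurable]
    congr with x
    rw [ENNReal.ofReal_toReal (fing x)]
  -- antitone measurability
  have volmeas : ∀ (G : ℝ → ℝ), Measurable (fun s => volume {x | s < G x}) := by
    intro G
    have : Antitone (fun s => volume {x | s < G x}) := by
      intro s s' hss'
      exact measure_mono fun x hx => lt_of_le_of_lt hss' hx
    exact this.measurable
  -- pointwise inequality
  have ptwise : ∀ s ∈ Ioi (0:ℝ),
      ENNReal.ofReal t * volume {x | s < G₁ x} + ENNReal.ofReal (1 - t) * volume {x | s < G₂ x}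
        ≤ volume {x | s < Hf x} := by
    intro s hs
    rw [mem_Ioi] at hs
    by_cases hs1 : 1 ≤ s
    · have e₁ : {x | s < G₁ x} = ∅ := by
        ext x; simp only [mem_setOf_eq, mem_empty_iff_false, iff_false, not_lt]
        exact le_trans (by simpa using ENNReal.toReal_mono ENNReal.one_ne_top (hb₁ x)) hs1
      have e₂ : {x | s < G₂ x} = ∅ := by
        ext x; simp only [mem_setOf_eq, mem_empty_iff_false, iff_false, not_lt]
        exact le_trans (by simpa using ENNReal.toReal_mono ENNReal.one_ne_top (hb₂ x)) hs1
      simp [e₁, e₂]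
    · push_neg at hs1
      have hofs : ENNReal.ofReal s < 1 := by
        rw [← ENNReal.ofReal_one]
        exact ENNReal.ofReal_lt_ofReal_iff_of_nonneg hs.le |>.mpr hs1
      have key : ∀ x y, ENNReal.ofReal s < g₁ x → ENNReal.ofReal s < g₂ y →
          s < Hf (t * x + (1 - t) * y) := by
        intro x y hx hy
        set m := min (g₁ x) (g₂ y) with hm
        have hm0 : m ≠ 0 := by
          have : (0:ℝ≥0∞) < m := lt_of_le_of_lt zero_le (lt_min hx hy)
          exact this.ne'
        have hmtop : m ≠ ∞ := by
          have : m ≤ 1 := le_trans (min_le_left _ _) (hb₁ x)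
          exact (this.trans_lt ENNReal.one_lt_top).ne
        have hsm : ENNReal.ofReal s < m := lt_min hx hy
        have hmm : m = m ^ t * m ^ (1 - t) := by
          rw [← ENNReal.rpow_add t (1 - t) hm0 hmtop]
          norm_num
        have hle : m ≤ g₁ x ^ t * g₂ y ^ (1 - t) := by
          rw [hmm]
          exact mul_le_mul' (ENNReal.rpow_le_rpow (min_le_left _ _) ht0.le)
            (ENNReal.rpow_le_rpow (min_le_right _ _) (by linarith))
        have hsh : ENNReal.ofReal s < h (t * x + (1 - t) * y) :=
          lt_of_lt_of_le (lt_of_lt_of_le hsm hle) (H x y)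
        have hsh' : ENNReal.ofReal s < h' (t * x + (1 - t) * y) := lt_min hsh hofs
        rw [hHf]
        exact (ENNReal.ofReal_lt_iff_lt_toReal hs.le (finh _)).mp hsh'
      have hAm : MeasurableSet {x | s < G₁ x} := measurableSet_lt measurable_const mG₁
      have hBm : MeasurableSet {x | s < G₂ x} := measurableSet_lt measurable_const mG₂
      have hAne : {x | s < G₁ x}.Nonempty := by
        obtain ⟨x, hx⟩ := hs₁ (ENNReal.ofReal s) hofs
        exact ⟨x, (ENNReal.ofReal_lt_iff_lt_toReal hs.le (fin₁ x)).mp hx⟩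
      have hBne : {x | s < G₂ x}.Nonempty := by
        obtain ⟨y, hy⟩ := hs₂ (ENNReal.ofReal s) hofs
        exact ⟨y, (ENNReal.ofReal_lt_iff_lt_toReal hs.le (fin₂ y)).mp hy⟩
      refine bm ht0 ht1 hAm hBm hAne hBne ?_
      intro x hx y hy
      have hx' : ENNReal.ofReal s < g₁ x := (ENNReal.ofReal_lt_iff_lt_toReal hs.le (fin₁ x)).mpr hx
      have hy' : ENNReal.ofReal s < g₂ y := (ENNReal.ofReal_lt_iff_lt_toReal hs.le (fin₂ y)).mpr hy
      exact key x y hx' hy'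
  calc ENNReal.ofReal t * (∫⁻ x, g₁ x) + ENNReal.ofReal (1 - t) * (∫⁻ x, g₂ x)
      = ∫⁻ s in Ioi (0:ℝ), (ENNReal.ofReal t * volume {x | s < G₁ x}
          + ENNReal.ofReal (1 - t) * volume {x | s < G₂ x}) := by
        rw [lc g₁ m₁ fin₁, lc g₂ m₂ fin₂, ← lintegral_const_mul _ (volmeas G₁), ← lintegral_const_mul _ (volmeas G₂),
          ← lintegral_add_left ((volmeas G₁).const_mul _)]
    _ ≤ ∫⁻ s in Ioi (0:ℝ), volume {x | s < Hf x} :=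
        setLIntegral_mono (volmeas Hf) ptwise
    _ = ∫⁻ x, h' x := (lc h' mh' finh).symm
    _ ≤ ∫⁻ x, h x := lintegral_mono fun x => min_le_left _ _

/-- AM–GM for two ENNReal numbers. -/
lemma ennreal_amgm (a b : ℝ≥0∞) {t : ℝ} (ht0 : 0 < t) (ht1 : t < 1) :
    a ^ t * b ^ (1 - t) ≤ ENNReal.ofReal t * a + ENNReal.ofReal (1 - t) * b := by
  have ht1' : 0 < 1 - t := by linarith
  rcases eq_or_ne a ∞ with rfl | ha
  · have : ENNReal.ofReal t * ∞ = ∞ := by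
      rw [ENNReal.mul_top]; simp [ENNReal.ofReal_eq_zero, not_le, ht0]
    simp [this]
  rcases eq_or_ne b ∞ with rfl | hb
  · have : ENNReal.ofReal (1 - t) * ∞ = ∞ := by
      rw [ENNReal.mul_top]; simp [ENNReal.ofReal_eq_zero, not_le, ht1', ht1]
    simp [this]
  · lift a to ℝ≥0 using ha
    lift b to ℝ≥0 using hb
    have key := NNReal.geom_mean_le_arith_mean2_weighted t.toNNReal (1-t).toNNReal a b ?_
    · have h1 : ((t.toNNReal : ℝ)) = t := Real.coe_toNNReal t ht0.le
      have h2 : (((1-t).toNNReal : ℝ)) = 1 - t := Real.coe_toNNReal _ ht1'.le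
      rw [h1, h2] at key
      calc (a:ℝ≥0∞) ^ t * (b:ℝ≥0∞) ^ (1 - t)
          = ((a ^ t * b ^ (1 - t) : ℝ≥0) : ℝ≥0∞) := by
            rw [ENNReal.coe_mul, ENNReal.coe_rpow_of_nonneg _ ht0.le,
              ENNReal.coe_rpow_of_nonneg _ ht1'.le]
        _ ≤ ((t.toNNReal * a + (1-t).toNNReal * b : ℝ≥0) : ℝ≥0∞) := ENNReal.coe_le_coe.mpr key
        _ = ENNReal.ofReal t * a + ENNReal.ofReal (1 - t) * b := by
            rw [ENNReal.coe_add, ENNReal.coe_mul, ENNReal.coe_mul]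
            rfl
    · have : t.toNNReal + (1-t).toNNReal = (1:ℝ).toNNReal := by
        rw [← Real.toNNReal_add ht0.le ht1'.le]; norm_num
      simpa using this

lemma inv_rpow_expand {t₁ t₂ : ℝ} {M₁ M₂ : ℝ≥0∞} (hM₁t : M₁ ^ t₁ ≠ 0) (hM₂t : M₂ ^ t₂ ≠ 0)
    (ht₁ : 0 ≤ t₁) (ht₂ : 0 ≤ t₂) (a b : ℝ≥0∞) :
    (M₁⁻¹ * a) ^ t₁ * (M₂⁻¹ * b) ^ t₂ = (M₁ ^ t₁ * M₂ ^ t₂)⁻¹ * (a ^ t₁ * b ^ t₂) := by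
  rw [ENNReal.mul_rpow_of_nonneg _ _ ht₁, ENNReal.mul_rpow_of_nonneg _ _ ht₂,
    ENNReal.inv_rpow, ENNReal.inv_rpow, ENNReal.mul_inv (Or.inl hM₁t) (Or.inr hM₂t)]
  ring

lemma PL_bounded (g₁ g₂ h : ℝ → ℝ≥0∞) (m₁ : Measurable g₁) (m₂ : Measurable g₂)
    (mh : Measurable h) {t : ℝ} (ht0 : 0 < t) (ht1 : t < 1)
    (hM₁ : (⨆ x, g₁ x) ≠ ∞) (hM₂ : (⨆ x, g₂ x) ≠ ∞)
    (H : ∀ x y, g₁ x ^ t * g₂ y ^ (1 - t) ≤ h (t * x + (1 - t) * y)) :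
    (∫⁻ x, g₁ x) ^ t * (∫⁻ x, g₂ x) ^ (1 - t) ≤ ∫⁻ x, h x := by
  have ht1' : 0 < 1 - t := by linarith
  set M₁ := ⨆ x, g₁ x with hM₁def
  set M₂ := ⨆ x, g₂ x with hM₂def
  rcases eq_or_ne M₁ 0 with hM₁0 | hM₁0
  · have : ∀ x, g₁ x = 0 := by
      intro x
      have := le_iSup g₁ x
      rw [← hM₁def, hM₁0] at this
      simpa using this
    rw [lintegral_congr this, lintegral_zero, ENNReal.zero_rpow_of_pos ht0, zero_mul]
    exact zero_le
  rcases eq_or_ne M₂ 0 with hM₂0 | hM₂0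
  · have : ∀ x, g₂ x = 0 := by
      intro x
      have := le_iSup g₂ x
      rw [← hM₂def, hM₂0] at this
      simpa using this
    rw [lintegral_congr this, lintegral_zero, ENNReal.zero_rpow_of_pos ht1', mul_zero]
    exact zero_le
  -- scaling
  have hM₁t0 : M₁ ^ t ≠ 0 := by simp [ENNReal.rpow_eq_zero_iff, hM₁0, hM₁, ht0, ht0.asymm]
  have hM₁ttop : M₁ ^ t ≠ ∞ := by simp [ENNReal.rpow_eq_top_iff, hM₁0, hM₁, ht0, ht0.asymm]
  have hM₂t0 : M₂ ^ (1-t) ≠ 0 := by simp [ENNReal.rpow_eq_zero_iff, hM₂0, hM₂, ht1', ht1'.asymm]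
  have hM₂ttop : M₂ ^ (1-t) ≠ ∞ := by simp [ENNReal.rpow_eq_top_iff, hM₂0, hM₂, ht1', ht1'.asymm]
  set c := M₁ ^ t * M₂ ^ (1 - t) with hc
  have hc0 : c ≠ 0 := by simp [hc, hM₁t0, hM₂t0]
  have hctop : c ≠ ∞ := ENNReal.mul_ne_top hM₁ttop hM₂ttop
  set G₁ : ℝ → ℝ≥0∞ := fun x => M₁⁻¹ * g₁ x with hG₁
  set G₂ : ℝ → ℝ≥0∞ := fun x => M₂⁻¹ * g₂ x with hG₂
  set Hh : ℝ → ℝ≥0∞ := fun z => c⁻¹ * h z with hHh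
  have key := PL_norm G₁ G₂ Hh (m₁.const_mul _) (m₂.const_mul _) (mh.const_mul _) ht0 ht1
    ?_ ?_ ?_ ?_ ?_
  · rw [hG₁, hG₂, hHh] at key
    rw [lintegral_const_mul _ m₁, lintegral_const_mul _ m₂, lintegral_const_mul _ mh] at key
    have amgm := ennreal_amgm (M₁⁻¹ * ∫⁻ x, g₁ x) (M₂⁻¹ * ∫⁻ x, g₂ x) ht0 ht1
    have key2 : (M₁⁻¹ * ∫⁻ x, g₁ x) ^ t * (M₂⁻¹ * ∫⁻ x, g₂ x) ^ (1 - t) ≤ c⁻¹ * ∫⁻ x, h x :=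
      le_trans amgm key
    have expand : (M₁⁻¹ * ∫⁻ x, g₁ x) ^ t * (M₂⁻¹ * ∫⁻ x, g₂ x) ^ (1 - t)
        = c⁻¹ * ((∫⁻ x, g₁ x) ^ t * (∫⁻ x, g₂ x) ^ (1 - t)) := by
      rw [inv_rpow_expand hM₁t0 hM₂t0 ht0.le ht1'.le, ← hc]
    rw [expand] at key2
    exact (ENNReal.mul_le_mul_iff_right (ENNReal.inv_ne_zero.mpr hctop)
      (ENNReal.inv_ne_top.mpr hc0)).mp key2
  · intro x
    rw [hG₁]
    calc M₁⁻¹ * g₁ x ≤ M₁⁻¹ * M₁ := mul_le_mul_right (le_iSup g₁ x) _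
      _ = 1 := ENNReal.inv_mul_cancel hM₁0 hM₁
  · intro x
    rw [hG₂]
    calc M₂⁻¹ * g₂ x ≤ M₂⁻¹ * M₂ := mul_le_mul_right (le_iSup g₂ x) _
      _ = 1 := ENNReal.inv_mul_cancel hM₂0 hM₂
  · intro s hs
    have : s * M₁ < M₁ := by
      calc s * M₁ < 1 * M₁ := (ENNReal.mul_lt_mul_iff_left hM₁0 hM₁).mpr hs
        _ = M₁ := one_mul _
    rw [hM₁def] at this
    obtain ⟨x, hx⟩ := lt_iSup_iff.mp this
    refine ⟨x, ?_⟩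
    rw [hG₁]
    have := (ENNReal.mul_lt_mul_iff_right (ENNReal.inv_ne_zero.mpr hM₁) (ENNReal.inv_ne_top.mpr hM₁0)).mpr hx
    calc s = M₁⁻¹ * (s * M₁) := by
          rw [mul_comm s M₁, ← mul_assoc, ENNReal.inv_mul_cancel hM₁0 hM₁, one_mul]
      _ < M₁⁻¹ * g₁ x := this
  · intro s hs
    have : s * M₂ < M₂ := by
      calc s * M₂ < 1 * M₂ := (ENNReal.mul_lt_mul_iff_left hM₂0 hM₂).mpr hs
        _ = M₂ := one_mul _
    rw [hM₂def] at this
    obtain ⟨y, hy⟩ := lt_iSup_iff.mp this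
    refine ⟨y, ?_⟩
    rw [hG₂]
    have := (ENNReal.mul_lt_mul_iff_right (ENNReal.inv_ne_zero.mpr hM₂) (ENNReal.inv_ne_top.mpr hM₂0)).mpr hy
    calc s = M₂⁻¹ * (s * M₂) := by
          rw [mul_comm s M₂, ← mul_assoc, ENNReal.inv_mul_cancel hM₂0 hM₂, one_mul]
      _ < M₂⁻¹ * g₂ y := this
  · intro x y
    rw [hG₁, hG₂, hHh]
    have expand : (M₁⁻¹ * g₁ x) ^ t * (M₂⁻¹ * g₂ y) ^ (1 - t)
        = c⁻¹ * (g₁ x ^ t * g₂ y ^ (1 - t)) := by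
      rw [inv_rpow_expand hM₁t0 hM₂t0 ht0.le ht1'.le, ← hc]
    rw [expand]
    exact mul_le_mul_right (H x y) _

lemma rpow_iSup (u : ℕ → ℝ≥0∞) {t : ℝ} (ht : 0 < t) :
    (⨆ n, u n) ^ t = ⨆ n, u n ^ t := by
  apply le_antisymm
  · have hle : ∀ n, u n ≤ (⨆ n, u n ^ t) ^ (1 / t) := by
      intro n
      have e : u n = (u n ^ t) ^ (1 / t) := by
        rw [← ENNReal.rpow_mul, mul_one_div, div_self ht.ne', ENNReal.rpow_one]
      rw [e]
      exact ENNReal.rpow_le_rpow (le_iSup (fun k => u k ^ t) n) (by positivity)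
    calc (⨆ n, u n) ^ t ≤ ((⨆ n, u n ^ t) ^ (1 / t)) ^ t :=
          ENNReal.rpow_le_rpow (iSup_le hle) ht.le
      _ = ⨆ n, u n ^ t := by
          rw [← ENNReal.rpow_mul, one_div, inv_mul_cancel₀ ht.ne', ENNReal.rpow_one]
  · exact iSup_le fun n => ENNReal.rpow_le_rpow (le_iSup u n) ht.le

lemma PL (g₁ g₂ h : ℝ → ℝ≥0∞) (m₁ : Measurable g₁) (m₂ : Measurable g₂)
    (mh : Measurable h) {t : ℝ} (ht0 : 0 < t) (ht1 : t < 1)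
    (H : ∀ x y, g₁ x ^ t * g₂ y ^ (1 - t) ≤ h (t * x + (1 - t) * y)) :
    (∫⁻ x, g₁ x) ^ t * (∫⁻ x, g₂ x) ^ (1 - t) ≤ ∫⁻ x, h x := by
  have ht1' : 0 < 1 - t := by linarith
  have happ : ∀ n : ℕ, (∫⁻ x, min (g₁ x) n) ^ t * (∫⁻ x, min (g₂ x) n) ^ (1 - t) ≤ ∫⁻ x, h x := by
    intro n
    refine PL_bounded _ _ _ (m₁.min measurable_const) (m₂.min measurable_const) mh ht0 ht1 ?_ ?_ ?_
    · exact ne_top_of_le_ne_top (ENNReal.natCast_ne_top n) (iSup_le fun x => min_le_right _ _)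
    · exact ne_top_of_le_ne_top (ENNReal.natCast_ne_top n) (iSup_le fun x => min_le_right _ _)
    · intro x y
      refine le_trans ?_ (H x y)
      exact mul_le_mul' (ENNReal.rpow_le_rpow (min_le_left _ _) ht0.le)
        (ENNReal.rpow_le_rpow (min_le_left _ _) ht1'.le)
  have lim : ∀ (g : ℝ → ℝ≥0∞), Measurable g →
      (⨆ n : ℕ, ∫⁻ x, min (g x) n) = ∫⁻ x, g x := by
    intro g mg
    rw [← lintegral_iSup (fun n => mg.min measurable_const)
      (fun n m hnm x => min_le_min le_rfl (Nat.cast_le.mpr hnm))]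
    congr with x
    have : (⨆ n : ℕ, min (g x) (n : ℝ≥0∞)) = min (g x) (⨆ n : ℕ, (n : ℝ≥0∞)) := by
      exact (inf_iSup_eq _ _).symm
    rw [this, ENNReal.iSup_natCast, min_eq_left le_top]
  have mono₁ : Monotone fun n : ℕ => ∫⁻ x, min (g₁ x) n := fun n m hnm =>
    lintegral_mono fun x => min_le_min le_rfl (Nat.cast_le.mpr hnm)
  have mono₂ : Monotone fun n : ℕ => ∫⁻ x, min (g₂ x) n := fun n m hnm =>
    lintegral_mono fun x => min_le_min le_rfl (Nat.cast_le.mpr hnm)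
  rw [← lim g₁ m₁, ← lim g₂ m₂, rpow_iSup _ ht0, rpow_iSup _ ht1', ENNReal.iSup_mul]
  refine iSup_le fun n => ?_
  rw [ENNReal.mul_iSup]
  refine iSup_le fun m => ?_
  calc (∫⁻ x, min (g₁ x) n) ^ t * (∫⁻ x, min (g₂ x) m) ^ (1 - t)
      ≤ (∫⁻ x, min (g₁ x) ((max n m : ℕ) : ℝ≥0∞)) ^ t
        * (∫⁻ x, min (g₂ x) ((max n m : ℕ) : ℝ≥0∞)) ^ (1 - t) :=
        mul_le_mul' (ENNReal.rpow_le_rpow (mono₁ (le_max_left n m)) ht0.le)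
          (ENNReal.rpow_le_rpow (mono₂ (le_max_right n m)) ht1'.le)
    _ ≤ ∫⁻ x, h x := happ (max n m)

lemma marginal_aux (f : ℝ × ℝ → ℝ≥0∞) (hf : Measurable f)
    (hlc : ∀ a b : ℝ × ℝ, ∀ t ∈ Set.Icc (0 : ℝ) 1,
      f a ^ t * f b ^ (1 - t) ≤ f (t • a + (1 - t) • b))
    (Q : Set ℝ) (hQconv : Convex ℝ Q) (hQm : MeasurableSet Q) :
    ∀ d₁ d₂ : ℝ, ∀ t ∈ Set.Icc (0 : ℝ) 1,
      (∫⁻ r in Q, f (d₁, r)) ^ t * (∫⁻ r in Q, f (d₂, r)) ^ (1 - t) ≤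
        ∫⁻ r in Q, f (t * d₁ + (1 - t) * d₂, r) := by
  intro d₁ d₂ t ht
  obtain ⟨ht0, ht1⟩ := ht
  rcases eq_or_lt_of_le ht0 with rfl | ht0'
  · simp
  rcases eq_or_lt_of_le ht1 with rfl | ht1'
  · simp
  set g₁ : ℝ → ℝ≥0∞ := Q.indicator (fun r => f (d₁, r)) with hg₁
  set g₂ : ℝ → ℝ≥0∞ := Q.indicator (fun r => f (d₂, r)) with hg₂
  set h : ℝ → ℝ≥0∞ := Q.indicator (fun r => f (t * d₁ + (1 - t) * d₂, r)) with hh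
  have m₁ : Measurable g₁ := (hf.comp measurable_prodMk_left).indicator hQm
  have m₂ : Measurable g₂ := (hf.comp measurable_prodMk_left).indicator hQm
  have mh : Measurable h := (hf.comp measurable_prodMk_left).indicator hQm
  have e₁ : ∫⁻ r in Q, f (d₁, r) = ∫⁻ r, g₁ r := (lintegral_indicator hQm (fun r => f (d₁, r))).symm
  have e₂ : ∫⁻ r in Q, f (d₂, r) = ∫⁻ r, g₂ r := (lintegral_indicator hQm (fun r => f (d₂, r))).symm
  have eh : ∫⁻ r in Q, f (t * d₁ + (1 - t) * d₂, r) = ∫⁻ r, h r :=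
    (lintegral_indicator hQm (fun r => f (t * d₁ + (1 - t) * d₂, r))).symm
  rw [e₁, e₂, eh]
  refine PL g₁ g₂ h m₁ m₂ mh ht0' ht1' ?_
  intro x y
  by_cases hx : x ∈ Q
  · by_cases hy : y ∈ Q
    · have hz : t * x + (1 - t) * y ∈ Q := hQconv hx hy ht0 (by linarith) (by ring)
      rw [hg₁, hg₂, hh, indicator_of_mem hx, indicator_of_mem hy, indicator_of_mem hz]
      have := hlc (d₁, x) (d₂, y) t ⟨ht0, ht1⟩
      simpa [Prod.smul_mk, Prod.mk_add_mk] using this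
    · rw [hg₂, indicator_of_notMem hy, ENNReal.zero_rpow_of_pos (by linarith), mul_zero]
      exact zero_le
  · rw [hg₁, indicator_of_notMem hx, ENNReal.zero_rpow_of_pos ht0', zero_mul]
    exact zero_le

end PrekopaAux

/-- Prékopa-type fact invoked in Example 2: the marginal (lower Lebesgue
integral over a convex measurable set `Q`) of a jointly log-concave function is
log-concave. -/
theorem marginal_logConcave (f : ℝ × ℝ → ℝ≥0∞) (hf : Measurable f)
    (hlc : ∀ a b : ℝ × ℝ, ∀ t ∈ Set.Icc (0 : ℝ) 1,
      f a ^ t * f b ^ (1 - t) ≤ f (t • a + (1 - t) • b))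
    (Q : Set ℝ) (hQconv : Convex ℝ Q) (hQm : MeasurableSet Q) :
    ∀ d₁ d₂ : ℝ, ∀ t ∈ Set.Icc (0 : ℝ) 1,
      (∫⁻ r in Q, f (d₁, r)) ^ t * (∫⁻ r in Q, f (d₂, r)) ^ (1 - t) ≤
        ∫⁻ r in Q, f (t * d₁ + (1 - t) * d₂, r) := by
  exact marginal_aux f hf hlc Q hQconv hQm
end
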